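/- For every integer n ≥ 1 and every real number α, the sum over all integer partitions of n, encoded as functions λ : {1,…,n} → ℕ with ∑_{j=1}^n j·λ_j = n, of the quantity n! · ∏_{j=1}^n α^{λ_j} / (j^{λ_j} · λ_j!) equals the rising factorial α^{↑n} = α(α+1)⋯(α+n−1). (Equivalently, the Ewens sampling formula p_n(λ;α) = (n!/α^{↑n}) ∏_j α^{λ_j}/(j^{λ_j} λ_j!) defines a probability distribution on integer partitions of n.) -/

import Mathlib

open Finset

/-- The rising factorial `x^{↑n} = x(x+1)⋯(x+n−1)`. -/
def risingFactorial (x : ℝ) (n : ℕ) : ℝ := ∏ i ∈ Finset.range n, (x + i)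

private def ewF (n m : ℕ) : Finset (Fin n → ℕ) :=
  (Fintype.piFinset fun _ : Fin n => Finset.range (n + 1)).filter
    (fun l : Fin n → ℕ => ∑ j : Fin n, (j.1 + 1) * l j = m)

private noncomputable def ewW (n : ℕ) (α : ℝ) (l : Fin n → ℕ) : ℝ :=
  ∏ j : Fin n, α ^ (l j) / ((j.1 + 1 : ℝ) ^ (l j) * (Nat.factorial (l j) : ℝ))

private noncomputable def ewS (n : ℕ) (α : ℝ) (m : ℕ) : ℝ := ∑ l ∈ ewF n m, ewW n α l

private lemma mem_ewF {n m : ℕ} {l : Fin n → ℕ} :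
    l ∈ ewF n m ↔ (∀ j, l j < n + 1) ∧ ∑ j : Fin n, (j.1 + 1) * l j = m := by
  simp [ewF, Fintype.mem_piFinset]

private lemma ewS_zero (n : ℕ) (α : ℝ) : ewS n α 0 = 1 := by
  have h : ewF n 0 = {fun _ => 0} := by
    ext l
    rw [mem_ewF, mem_singleton]
    constructor
    · rintro ⟨-, h⟩
      funext j
      have := Finset.sum_eq_zero_iff.mp h j (mem_univ j)
      show l j = 0
      simp only [Nat.mul_eq_zero] at this
      omega
    · rintro rfl
      exact ⟨fun j => by simp, by simp⟩
  simp [ewS, h, ewW]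

private lemma sum_split (n : ℕ) (l : Fin n → ℕ) (j : Fin n) :
    ∑ i : Fin n, (i.1 + 1) * l i = (j.1 + 1) * l j + ∑ i ∈ univ.erase j, (i.1 + 1) * l i :=
  (Finset.add_sum_erase _ _ (mem_univ j)).symm

private lemma sum_split_update (n : ℕ) (l : Fin n → ℕ) (j : Fin n) (b : ℕ) :
    ∑ i : Fin n, (i.1 + 1) * (Function.update l j b) i
      = (j.1 + 1) * b + ∑ i ∈ univ.erase j, (i.1 + 1) * l i := by
  rw [← Finset.add_sum_erase _ _ (mem_univ j), Function.update_self]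
  congr 1
  exact Finset.sum_congr rfl fun i hi => by
    rw [Function.update_of_ne (mem_erase.mp hi).1]

private lemma weight_update (n : ℕ) (α : ℝ) (l : Fin n → ℕ) (j : Fin n) (h : l j ≠ 0) :
    (((j.1 + 1) * l j : ℕ) : ℝ) * ewW n α l
      = α * ewW n α (Function.update l j (l j - 1)) := by
  obtain ⟨k, hk⟩ : ∃ k, l j = k + 1 := ⟨l j - 1, by omega⟩
  unfold ewW
  rw [← Finset.mul_prod_erase _ _ (mem_univ j), ← Finset.mul_prod_erase _ _ (mem_univ j)]
  have hprod : ∏ i ∈ univ.erase j,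
        α ^ (Function.update l j (l j - 1) i) /
          ((i.1 + 1 : ℝ) ^ (Function.update l j (l j - 1) i)
            * (Nat.factorial (Function.update l j (l j - 1) i) : ℝ))
      = ∏ i ∈ univ.erase j,
        α ^ (l i) / ((i.1 + 1 : ℝ) ^ (l i) * (Nat.factorial (l i) : ℝ)) :=
    Finset.prod_congr rfl fun i hi => by rw [Function.update_of_ne (mem_erase.mp hi).1]
  rw [hprod, Function.update_self, hk]
  have hkey : (((j.1 + 1) * (k + 1) : ℕ) : ℝ)
        * (α ^ (k + 1) / ((j.1 + 1 : ℝ) ^ (k + 1) * (Nat.factorial (k + 1) : ℝ)))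
      = α * (α ^ k / ((j.1 + 1 : ℝ) ^ k * (Nat.factorial k : ℝ))) := by
    have hx : (j.1 + 1 : ℝ) ≠ 0 := by positivity
    have hf : (Nat.factorial k : ℝ) ≠ 0 := Nat.cast_ne_zero.mpr k.factorial_ne_zero
    push_cast [Nat.factorial_succ, pow_succ]
    field_simp
  simp only [Nat.add_sub_cancel]
  rw [← mul_assoc, hkey, mul_assoc]

private lemma ewInner (n : ℕ) (α : ℝ) (m : ℕ) (hm : m ≤ n) (j : Fin n) :
    ∑ l ∈ ewF n m, (((j.1 + 1) * l j : ℕ) : ℝ) * ewW n α l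
      = if j.1 + 1 ≤ m then α * ewS n α (m - (j.1 + 1)) else 0 := by
  split_ifs with hj
  · rw [ewS, Finset.mul_sum]
    rw [← Finset.sum_filter_of_ne (p := fun l : Fin n → ℕ => l j ≠ 0)
      (fun l _ h0 hlj => h0 (by simp [hlj]))]
    refine Finset.sum_nbij' (fun l => Function.update l j (l j - 1))
      (fun μ => Function.update μ j (μ j + 1)) ?_ ?_ ?_ ?_ ?_
    · intro l hl
      rw [mem_filter, mem_ewF] at hl
      obtain ⟨⟨hbox, hc⟩, h0⟩ := hl
      show Function.update l j (l j - 1) ∈ ewF n (m - (j.1 + 1))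
      have hrel : (j.1 + 1) * l j = (j.1 + 1) * (l j - 1) + (j.1 + 1) := by
        obtain ⟨k, hk⟩ : ∃ k, l j = k + 1 := ⟨l j - 1, by omega⟩
        rw [hk, Nat.add_sub_cancel, Nat.mul_succ]
      rw [mem_ewF]
      constructor
      · intro i
        rcases eq_or_ne i j with rfl | hne
        · rw [Function.update_self]; have := hbox i; omega
        · rw [Function.update_of_ne hne]; exact hbox i
      · rw [sum_split_update]
        rw [sum_split n l j] at hc
        omega
    · intro μ hμ
      rw [mem_ewF] at hμ
      obtain ⟨hbox, hc⟩ := hμ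
      show Function.update μ j (μ j + 1) ∈
        (ewF n m).filter (fun l : Fin n → ℕ => l j ≠ 0)
      rw [sum_split n μ j] at hc
      have hrel : (j.1 + 1) * (μ j + 1) = (j.1 + 1) * μ j + (j.1 + 1) := Nat.mul_succ _ _
      have hle : μ j + 1 ≤ (j.1 + 1) * (μ j + 1) := Nat.le_mul_of_pos_left _ j.1.succ_pos
      rw [mem_filter, mem_ewF]
      refine ⟨⟨?_, ?_⟩, ?_⟩
      · intro i
        rcases eq_or_ne i j with rfl | hne
        · rw [Function.update_self]; omega
        · rw [Function.update_of_ne hne]; exact hbox i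
      · rw [sum_split_update]
        omega
      · simp
    · intro l hl
      rw [mem_filter] at hl
      show Function.update (Function.update l j (l j - 1)) j
          (Function.update l j (l j - 1) j + 1) = l
      funext i
      rcases eq_or_ne i j with rfl | hne
      · rw [Function.update_self, Function.update_self]
        have := hl.2
        omega
      · rw [Function.update_of_ne hne, Function.update_of_ne hne]
    · intro μ _
      show Function.update (Function.update μ j (μ j + 1)) j
          (Function.update μ j (μ j + 1) j - 1) = μ
      funext i
      rcases eq_or_ne i j with rfl | hne
      · rw [Function.update_self, Function.update_self, Nat.add_sub_cancel]
      · rw [Function.update_of_ne hne, Function.update_of_ne hne]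
    · intro l hl
      rw [mem_filter] at hl
      exact weight_update n α l j hl.2
  · refine Finset.sum_eq_zero fun l hl => ?_
    have hc := (mem_ewF.mp hl).2
    have hle : (j.1 + 1) * l j ≤ m := by
      rw [← hc]
      exact Finset.single_le_sum (f := fun i : Fin n => (i.1 + 1) * l i)
        (fun i _ => Nat.zero_le _) (mem_univ j)
    have hlj : l j = 0 := by nlinarith [Nat.lt_of_not_le hj]
    simp [hlj]

private lemma ewS_rec (n : ℕ) (α : ℝ) (m : ℕ) (hm : m ≤ n) :
    (m : ℝ) * ewS n α m = α * ∑ k ∈ Finset.range m, ewS n α k := by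
  have h1 : (m : ℝ) * ewS n α m
      = ∑ j : Fin n, ∑ l ∈ ewF n m, (((j.1 + 1) * l j : ℕ) : ℝ) * ewW n α l := by
    rw [ewS, Finset.mul_sum, Finset.sum_comm]
    refine Finset.sum_congr rfl fun l hl => ?_
    have hc : ∑ j : Fin n, (j.1 + 1) * l j = m := (mem_ewF.mp hl).2
    rw [← Finset.sum_mul]
    congr 1
    rw [← hc]
    push_cast
    rfl
  rw [h1]
  have h2 : ∀ j : Fin n, ∑ l ∈ ewF n m, (((j.1 + 1) * l j : ℕ) : ℝ) * ewW n α l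
      = if j.1 + 1 ≤ m then α * ewS n α (m - (j.1 + 1)) else 0 :=
    fun j => ewInner n α m hm j
  rw [Finset.sum_congr rfl fun j _ => h2 j]
  rw [Fin.sum_univ_eq_sum_range (fun j => if j + 1 ≤ m then α * ewS n α (m - (j + 1)) else 0) n]
  rw [← Finset.sum_subset (Finset.range_subset_range.mpr hm)
    (fun j _ hj => by rw [if_neg]; simp at hj ⊢; omega)]
  rw [Finset.sum_congr rfl (fun j hj => if_pos (by simp at hj; omega))]
  rw [← Finset.mul_sum]
  congr 1
  have := Finset.sum_range_reflect (fun k => ewS n α k) m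
  rw [← this]
  exact Finset.sum_congr rfl fun j hj => by congr 1; simp at hj; omega

private lemma key (n : ℕ) (α : ℝ) : ∀ m, m ≤ n →
    (Nat.factorial m : ℝ) * ewS n α m = risingFactorial α m := by
  intro m
  induction m with
  | zero => intro _; simp [ewS_zero, risingFactorial]
  | succ m ih =>
    intro hm
    have hm' : m ≤ n := by omega
    have r1 := ewS_rec n α (m + 1) hm
    have r2 := ewS_rec n α m hm'
    have hs : ∑ k ∈ Finset.range (m + 1), ewS n α k
        = ewS n α m + ∑ k ∈ Finset.range m, ewS n α k := by
      rw [Finset.sum_range_succ]; ring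
    have step : ((m : ℝ) + 1) * ewS n α (m + 1) = (α + m) * ewS n α m := by
      have : ((m + 1 : ℕ) : ℝ) * ewS n α (m + 1)
          = α * ewS n α m + (m : ℝ) * ewS n α m := by
        rw [r1, hs, r2]; ring
      push_cast at this
      linarith [this]
    have : (Nat.factorial (m + 1) : ℝ) * ewS n α (m + 1)
        = (Nat.factorial m : ℝ) * (((m : ℝ) + 1) * ewS n α (m + 1)) := by
      rw [Nat.factorial_succ]; push_cast; ring
    rw [this, step, risingFactorial, Finset.prod_range_succ, ← risingFactorial, ← ih hm']
    ring

/-- The Ewens sampling formula weights `n! ∏_j α^{λ_j}/(j^{λ_j} λ_j!)` on the integer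
partitions of `n` (encoded as multiplicity functions `λ : Fin n → ℕ` with
`∑_j (j+1)·λ_j = n`; note every multiplicity is automatically at most `n`)
sum to the rising factorial `α^{↑n}`. -/
theorem ewens_sampling_formula_normalization (n : ℕ) (hn : 1 ≤ n) (α : ℝ) :
    ∑ l ∈ (Fintype.piFinset fun _ : Fin n => Finset.range (n + 1)).filter
        (fun l : Fin n → ℕ => ∑ j : Fin n, (j.1 + 1) * l j = n),
      (Nat.factorial n : ℝ) *
        ∏ j : Fin n, α ^ (l j) / ((j.1 + 1 : ℝ) ^ (l j) * (Nat.factorial (l j) : ℝ)) =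
    risingFactorial α n := by
  have h := key n α n le_rfl
  rw [← h]
  simp only [ewS, ewF, ewW, Finset.mul_sum]
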